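/- Define the value function V by V(T,x) = 1_{A(T)}(x) and V(t,x) = max_{u ∈ B(t,x)} E_μ[1_{A(t)}(x) · V(t+1, f(t,x,u,ω))], with B(t,x) nonempty and finite. Then V(t₀,x₀) = max over admissible feedbacks u (i.e., u(t,x) ∈ B(t,x) for all t,x) of P(x(t) ∈ A(t) for t = t₀,...,T), where x(·) is the closed-loop trajectory from x₀ under u and P is the product law of the i.i.d. noise. -/

import Mathlib

open Finset Filter
open scoped Classical BigOperators

/-- State after evolving `k` steps from `x` at time `t` under feedback `u` and scenario `ω`. -/
def traj {X U W : Type*} (f : ℕ → X → U → W → X) (u : ℕ → X → U) (ω : ℕ → W) :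
    ℕ → X → ℕ → X
  | _, x, 0 => x
  | t, x, k + 1 => traj f u ω (t + 1) (f t x (u t x) (ω t)) k

/-- Probability, under the product law of the i.i.d. noise with marginal `μ`, that the
closed-loop trajectory starting from `x0` at time `t0` under feedback `u` satisfies the
state constraints `A s` for all `s = t0, …, T`. -/
noncomputable def viabProb {X U W : Type*} [Fintype W] [Inhabited W]
    (f : ℕ → X → U → W → X) (A : ℕ → Set X) (μ : W → ℝ) (T : ℕ)
    (u : ℕ → X → U) (t0 : ℕ) (x0 : X) : ℝ :=
  ∑ ω : Fin T → W, (∏ i, μ (ω i)) *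
    (if ∀ s ∈ Finset.Icc t0 T,
        traj f u (fun n => if h : n < T then ω ⟨n, h⟩ else default) t0 x0 (s - t0) ∈ A s
      then (1 : ℝ) else 0)

/-- The trajectory only depends on the noise at the times actually used. -/
lemma traj_congr {X U W : Type*} (f : ℕ → X → U → W → X) (u : ℕ → X → U)
    (ω ω' : ℕ → W) : ∀ (k t : ℕ) (x : X), (∀ n, t ≤ n → n < t + k → ω n = ω' n) →
    traj f u ω t x k = traj f u ω' t x k
  | 0, _, _, _ => rfl
  | k+1, t, x, h => by
      simp only [traj]
      rw [h t le_rfl (by omega)]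
      exact traj_congr f u ω ω' k (t+1) _ (fun n h1 h2 => h n (by omega) (by omega))

/-- Total mass of the product measure. -/
lemma sum_prod_mu {W : Type*} [Fintype W] {T : ℕ} (μ : W → ℝ) (hmu1 : ∑ w, μ w = 1) :
    ∑ ω : Fin T → W, (∏ i, μ (ω i)) = 1 := by
  classical
  rw [← Fintype.piFinset_univ, ← Finset.prod_univ_sum]
  simp [hmu1]

/-- Splitting off one coordinate of the product measure, for integrands that do not
depend on that coordinate except through their first argument. -/
lemma sum_split {W : Type*} [Fintype W] {T : ℕ} (μ : W → ℝ) (hmu1 : ∑ w, μ w = 1)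
    (i0 : Fin T) (F : W → (Fin T → W) → ℝ)
    (hF : ∀ w v ω, F w (Function.update ω i0 v) = F w ω) :
    ∑ ω : Fin T → W, (∏ i, μ (ω i)) * F (ω i0) ω
      = ∑ w, μ w * ∑ ω : Fin T → W, (∏ i, μ (ω i)) * F w ω := by
  classical
  have key : ∀ (w : W) (ω : Fin T → W),
      μ (ω i0) * ∏ i, μ (Function.update ω i0 w i) = μ w * ∏ i, μ (ω i) := by
    intro w ω
    have h1 : (fun i => μ (Function.update ω i0 w i))
        = Function.update (fun i => μ (ω i)) i0 (μ w) := by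
      funext i
      by_cases h : i = i0
      · subst h; simp
      · simp [Function.update_of_ne h]
    calc μ (ω i0) * ∏ i, μ (Function.update ω i0 w i)
        = μ (ω i0) * ∏ i, Function.update (fun i => μ (ω i)) i0 (μ w) i := by rw [h1]
      _ = μ (ω i0) * (μ w * ∏ i ∈ Finset.univ \ {i0}, μ (ω i)) := by
          rw [Finset.prod_update_of_mem (Finset.mem_univ i0)]
      _ = μ w * (μ (ω i0) * ∏ i ∈ Finset.univ.erase i0, μ (ω i)) := by
          rw [← Finset.sdiff_singleton_eq_erase]; ring
      _ = μ w * ∏ i, μ (ω i) := by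
          rw [Finset.mul_prod_erase Finset.univ (fun i => μ (ω i)) (Finset.mem_univ i0)]
  set φ : W × (Fin T → W) → W × (Fin T → W) :=
    fun p => (p.2 i0, Function.update p.2 i0 p.1) with hφ
  have hinv : Function.Involutive φ := by
    intro p
    simp only [hφ, Function.update_self]
    refine Prod.ext (by simp) ?_
    simp [Function.update_idem]
  have step : ∑ p : W × (Fin T → W), μ p.1 * ((∏ i, μ (p.2 i)) * F p.1 p.2)
      = ∑ p : W × (Fin T → W), μ p.1 * ((∏ i, μ (p.2 i)) * F (p.2 i0) p.2) := by
    refine Fintype.sum_bijective φ hinv.bijective _ _ ?_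
    intro p
    simp only [hφ, Function.update_self, hF]
    rw [← mul_assoc, ← mul_assoc, key p.1 p.2]
  calc ∑ ω : Fin T → W, (∏ i, μ (ω i)) * F (ω i0) ω
      = (∑ w, μ w) * ∑ ω : Fin T → W, (∏ i, μ (ω i)) * F (ω i0) ω := by rw [hmu1, one_mul]
    _ = ∑ w : W, ∑ ω : Fin T → W, μ w * ((∏ i, μ (ω i)) * F (ω i0) ω) := by
        rw [Finset.sum_mul]
        exact Finset.sum_congr rfl fun w _ => by rw [Finset.mul_sum]
    _ = ∑ p : W × (Fin T → W), μ p.1 * ((∏ i, μ (p.2 i)) * F (p.2 i0) p.2) := by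
        rw [Fintype.sum_prod_type]
    _ = ∑ p : W × (Fin T → W), μ p.1 * ((∏ i, μ (p.2 i)) * F p.1 p.2) := step.symm
    _ = ∑ w : W, ∑ ω : Fin T → W, μ w * ((∏ i, μ (ω i)) * F w ω) := by
        rw [Fintype.sum_prod_type]
    _ = ∑ w, μ w * ∑ ω : Fin T → W, (∏ i, μ (ω i)) * F w ω := by
        exact Finset.sum_congr rfl fun w _ => by rw [Finset.mul_sum]

/-- Value of the viability probability at the terminal time. -/
lemma viabProb_terminal {X U W : Type*} [Fintype W] [Inhabited W]
    (f : ℕ → X → U → W → X) (A : ℕ → Set X) (μ : W → ℝ) (hmu1 : ∑ w, μ w = 1)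
    (T : ℕ) (u : ℕ → X → U) (x : X) :
    viabProb f A μ T u T x = if x ∈ A T then (1 : ℝ) else 0 := by
  unfold viabProb
  have hcond : ∀ ω : Fin T → W,
      (∀ s ∈ Finset.Icc T T,
        traj f u (fun n => if h : n < T then ω ⟨n, h⟩ else default) T x (s - T) ∈ A s)
        ↔ x ∈ A T := by
    intro ω
    constructor
    · intro h
      have := h T (by simp)
      simpa [traj] using this
    · intro h s hs
      rw [Finset.mem_Icc] at hs
      have : s = T := le_antisymm hs.2 hs.1
      subst this
      simpa [traj] using h
  have : ∀ ω : Fin T → W,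
      (∏ i, μ (ω i)) *
        (if ∀ s ∈ Finset.Icc T T,
            traj f u (fun n => if h : n < T then ω ⟨n, h⟩ else default) T x (s - T) ∈ A s
          then (1 : ℝ) else 0)
      = (∏ i, μ (ω i)) * (if x ∈ A T then (1 : ℝ) else 0) := by
    intro ω
    rw [if_congr (hcond ω) rfl rfl]
  rw [Finset.sum_congr rfl (fun ω _ => this ω), ← Finset.sum_mul, sum_prod_mu μ hmu1, one_mul]

/-- One-step recursion (dynamic programming) for the viability probability. -/
lemma viabProb_succ {X U W : Type*} [Fintype W] [Inhabited W]
    (f : ℕ → X → U → W → X) (A : ℕ → Set X) (μ : W → ℝ) (hmu1 : ∑ w, μ w = 1)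
    (T : ℕ) (u : ℕ → X → U) (t : ℕ) (ht : t < T) (x : X) :
    viabProb f A μ T u t x
      = (if x ∈ A t then (1 : ℝ) else 0) *
          ∑ w, μ w * viabProb f A μ T u (t + 1) (f t x (u t x) w) := by
  classical
  set i0 : Fin T := ⟨t, ht⟩ with hi0
  set F : W → (Fin T → W) → ℝ := fun w ω =>
    (if ∀ s ∈ Finset.Icc (t + 1) T,
        traj f u (fun n => if h : n < T then ω ⟨n, h⟩ else default) (t + 1)
          (f t x (u t x) w) (s - (t + 1)) ∈ A s
      then (1 : ℝ) else 0) with hFdef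
  have hext : ∀ ω : Fin T → W,
      (fun n => if h : n < T then ω ⟨n, h⟩ else default) t = ω i0 := by
    intro ω; simp [hi0, ht]
  -- splitting the indicator
  have hind : ∀ ω : Fin T → W,
      (if ∀ s ∈ Finset.Icc t T,
          traj f u (fun n => if h : n < T then ω ⟨n, h⟩ else default) t x (s - t) ∈ A s
        then (1 : ℝ) else 0)
      = (if x ∈ A t then (1 : ℝ) else 0) * F (ω i0) ω := by
    intro ω
    set e : ℕ → W := fun n => if h : n < T then ω ⟨n, h⟩ else default with he
    have hstep : ∀ s, t + 1 ≤ s →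
        traj f u e t x (s - t) = traj f u e (t + 1) (f t x (u t x) (ω i0)) (s - (t + 1)) := by
      intro s hs
      have h1 : s - t = (s - (t + 1)) + 1 := by omega
      rw [h1]
      simp only [traj]
      rw [show e t = ω i0 from hext ω]
    have hiff : (∀ s ∈ Finset.Icc t T, traj f u e t x (s - t) ∈ A s)
        ↔ (x ∈ A t ∧ ∀ s ∈ Finset.Icc (t + 1) T,
            traj f u e (t + 1) (f t x (u t x) (ω i0)) (s - (t + 1)) ∈ A s) := by
      constructor
      · intro h
        refine ⟨?_, ?_⟩
        · have := h t (by simp [Finset.mem_Icc]; omega)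
          simpa [traj] using this
        · intro s hs
          rw [Finset.mem_Icc] at hs
          rw [← hstep s hs.1]
          exact h s (by rw [Finset.mem_Icc]; omega)
      · rintro ⟨hx, h⟩ s hs
        rw [Finset.mem_Icc] at hs
        rcases eq_or_lt_of_le hs.1 with h1 | h1
        · subst h1
          simpa [traj] using hx
        · rw [hstep s h1]
          exact h s (by rw [Finset.mem_Icc]; omega)
      
    rw [if_congr hiff rfl rfl, hFdef]
    by_cases hx : x ∈ A t <;> simp [hx, he]
  have hF : ∀ w v ω, F w (Function.update ω i0 v) = F w ω := by
    intro w v ω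
    simp only [hFdef]
    refine if_congr (forall₂_congr fun s hs => ?_) rfl rfl
    rw [traj_congr f u
      (fun n => if h : n < T then (Function.update ω i0 v) ⟨n, h⟩ else default)
      (fun n => if h : n < T then ω ⟨n, h⟩ else default) (s - (t+1)) (t+1)
      (f t x (u t x) w) ?_]
    intro n h1 h2
    by_cases h : n < T
    · simp only [dif_pos h]
      rw [Function.update_of_ne]
      intro hc
      rw [Fin.mk.injEq] at hc
      omega
    · simp [dif_neg h]
  calc viabProb f A μ T u t x
      = ∑ ω : Fin T → W, (∏ i, μ (ω i)) * ((if x ∈ A t then (1 : ℝ) else 0) * F (ω i0) ω) := by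
        unfold viabProb
        exact Finset.sum_congr rfl fun ω _ => by rw [hind ω]
    _ = (if x ∈ A t then (1 : ℝ) else 0) * ∑ ω : Fin T → W, (∏ i, μ (ω i)) * F (ω i0) ω := by
        rw [Finset.mul_sum]
        exact Finset.sum_congr rfl fun ω _ => by ring
    _ = (if x ∈ A t then (1 : ℝ) else 0) *
          ∑ w, μ w * ∑ ω : Fin T → W, (∏ i, μ (ω i)) * F w ω := by
        rw [sum_split μ hmu1 i0 F hF]
    _ = (if x ∈ A t then (1 : ℝ) else 0) *
          ∑ w, μ w * viabProb f A μ T u (t + 1) (f t x (u t x) w) := rfl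

theorem value_function_eq_max_viability_probability
    {X U W : Type*} [Fintype W] [Inhabited W]
    (f : ℕ → X → U → W → X) (B : ℕ → X → Finset U) (A : ℕ → Set X)
    (μ : W → ℝ) (hmu0 : ∀ w, 0 ≤ μ w) (hmu1 : ∑ w, μ w = 1) (T : ℕ)
    (hB : ∀ t x, (B t x).Nonempty)
    (V : ℕ → X → ℝ)
    (hVT : ∀ x, V T x = if x ∈ A T then (1 : ℝ) else 0)
    (hV : ∀ t, t < T → ∀ x,
      V t x = (B t x).sup' (hB t x)
        (fun u => (if x ∈ A t then (1 : ℝ) else 0) * ∑ w, μ w * V (t + 1) (f t x u w)))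
    (t0 : ℕ) (ht0 : t0 ≤ T) (x0 : X) :
    IsGreatest
      {r : ℝ | ∃ u : ℕ → X → U, (∀ t x, u t x ∈ B t x) ∧
        r = viabProb f A μ T u t0 x0}
      (V t0 x0) := by
  classical
  -- upper bound: any admissible feedback gives at most V
  have hub : ∀ (u : ℕ → X → U), (∀ t x, u t x ∈ B t x) →
      ∀ k t, t + k = T → ∀ x, viabProb f A μ T u t x ≤ V t x := by
    intro u hu k
    induction k with
    | zero =>
        intro t htk x
        have htT : t = T := by omega
        rw [htT, viabProb_terminal f A μ hmu1 T u x, hVT x]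
    | succ k ih =>
        intro t htk x
        have ht : t < T := by omega
        rw [viabProb_succ f A μ hmu1 T u t ht x, hV t ht x]
        have h1 : (if x ∈ A t then (1 : ℝ) else 0) *
              ∑ w, μ w * viabProb f A μ T u (t + 1) (f t x (u t x) w)
            ≤ (if x ∈ A t then (1 : ℝ) else 0) *
              ∑ w, μ w * V (t + 1) (f t x (u t x) w) := by
          refine mul_le_mul_of_nonneg_left ?_ (by positivity)
          refine Finset.sum_le_sum fun w _ => ?_
          exact mul_le_mul_of_nonneg_left (ih (t + 1) (by omega) _) (hmu0 w)
        exact h1.trans (Finset.le_sup'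
          (fun u' => (if x ∈ A t then (1 : ℝ) else 0) * ∑ w, μ w * V (t + 1) (f t x u' w))
          (hu t x))
  -- the optimal feedback
  have hopt : ∀ t x, ∃ b ∈ B t x, (t < T →
      ((B t x).sup' (hB t x)
        (fun u' => (if x ∈ A t then (1 : ℝ) else 0) * ∑ w, μ w * V (t + 1) (f t x u' w))
        = (if x ∈ A t then (1 : ℝ) else 0) * ∑ w, μ w * V (t + 1) (f t x b w))) := by
    intro t x
    by_cases ht : t < T
    · obtain ⟨b, hb, hbe⟩ := Finset.exists_mem_eq_sup' (hB t x)
        (fun u' => (if x ∈ A t then (1 : ℝ) else 0) * ∑ w, μ w * V (t + 1) (f t x u' w))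
      exact ⟨b, hb, fun _ => hbe⟩
    · exact ⟨(hB t x).choose, (hB t x).choose_spec, fun h => absurd h ht⟩
  choose ustar hustar hopt using hopt
  have heq : ∀ k t, t + k = T → ∀ x, viabProb f A μ T ustar t x = V t x := by
    intro k
    induction k with
    | zero =>
        intro t htk x
        have htT : t = T := by omega
        rw [htT, viabProb_terminal f A μ hmu1 T ustar x, hVT x]
    | succ k ih =>
        intro t htk x
        have ht : t < T := by omega
        rw [viabProb_succ f A μ hmu1 T ustar t ht x, hV t ht x, hopt t x ht]
        congr 1
        refine Finset.sum_congr rfl fun w _ => ?_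
        rw [ih (t + 1) (by omega) (f t x (ustar t x) w)]
  constructor
  · exact ⟨ustar, hustar, (heq (T - t0) t0 (by omega) x0).symm⟩
  · rintro r ⟨u, hu, rfl⟩
    exact hub u hu (T - t0) t0 (by omega) x0
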